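/- Let G be a minimal counterexample (fewest edges) to the claim that planar graphs of girth ≥ 6 and maximum degree Δ ≥ 4 satisfy χ'_s ≤ 3Δ+6. Then every 2-vertex of G has at least one neighbor of degree at least 5. -/

import Mathlib

open SimpleGraph Finset

universe u

variable {V : Type u}

/-- Two edges are at distance at most 2 (in the line graph sense): they share an
endpoint or some endpoint of one is adjacent to an endpoint of the other. -/
def edgesConflict (G : SimpleGraph V) (e f : Sym2 V) : Prop :=
  ∃ a b, a ∈ e ∧ b ∈ f ∧ (a = b ∨ G.Adj a b)

/-- A strong edge coloring: distinct edges at distance at most 2 get distinct colors. -/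
def IsStrongEdgeColoring (G : SimpleGraph V) {n : ℕ} (c : G.edgeSet → Fin n) : Prop :=
  ∀ e f : G.edgeSet, e ≠ f → edgesConflict G e.1 f.1 → c e ≠ c f

def HasStrongEdgeColoring (G : SimpleGraph V) (n : ℕ) : Prop :=
  ∃ c : G.edgeSet → Fin n, IsStrongEdgeColoring G c

/-- The strong chromatic index. -/
noncomputable def strongChromaticIndex (G : SimpleGraph V) : ℕ :=
  sInf { n | HasStrongEdgeColoring G n }

/-- A proper edge coloring: distinct edges sharing an endpoint get distinct colors. -/
def IsProperEdgeColoring (G : SimpleGraph V) {n : ℕ} (c : G.edgeSet → Fin n) : Prop :=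
  ∀ e f : G.edgeSet, e ≠ f → (∃ a, a ∈ e.1 ∧ a ∈ f.1) → c e ≠ c f

/-- The edge chromatic number (chromatic index). -/
noncomputable def edgeChromaticNumber (G : SimpleGraph V) : ℕ :=
  sInf { n | ∃ c : G.edgeSet → Fin n, IsProperEdgeColoring G c }

/-- `G` has `H` as a minor: disjoint nonempty connected branch sets, one per vertex of `H`,
with edges of `G` between branch sets corresponding to edges of `H`. -/
def HasMinor {W : Type} (G : SimpleGraph V) (H : SimpleGraph W) : Prop :=
  ∃ b : W → Set V, (∀ w, (b w).Nonempty) ∧ (∀ w, (G.induce (b w)).Connected) ∧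
    (Pairwise fun w₁ w₂ => Disjoint (b w₁) (b w₂)) ∧
    ∀ ⦃w₁ w₂⦄, H.Adj w₁ w₂ → ∃ a ∈ b w₁, ∃ a' ∈ b w₂, G.Adj a a'

/-- Planarity, via Wagner's theorem: no `K₅` minor and no `K₃,₃` minor. -/
def IsPlanar (G : SimpleGraph V) : Prop :=
  ¬ HasMinor G (⊤ : SimpleGraph (Fin 5)) ∧ ¬ HasMinor G (completeBipartiteGraph (Fin 3) (Fin 3))


section AuxLemmas

lemma edgesConflict_comm {G : SimpleGraph V} {e f : Sym2 V} (h : edgesConflict G e f) :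
    edgesConflict G f e := by
  obtain ⟨a, b, ha, hb, hab⟩ := h
  exact ⟨b, a, hb, ha, hab.imp Eq.symm (fun h => h.symm)⟩

lemma exists_other {K : SimpleGraph V} {f : Sym2 V} (hf : f ∈ K.edgeSet) {x : V}
    (hx : x ∈ f) : ∃ y, K.Adj x y ∧ f = s(x, y) := by
  induction f with
  | _ a b =>
    rcases Sym2.mem_iff.mp hx with rfl | rfl
    · exact ⟨b, hf, rfl⟩
    · exact ⟨a, ((K.mem_edgeSet).mp hf).symm, Sym2.eq_swap⟩

lemma not_mem_edge_of_isolated {K : SimpleGraph V} {v : V} (h : ∀ z, ¬ K.Adj v z)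
    {f : Sym2 V} (hf : f ∈ K.edgeSet) : v ∉ f := by
  intro hv
  obtain ⟨y, hy, _⟩ := exists_other hf hv
  exact h y hy

lemma hasColoring_of_no_edges {H : SimpleGraph V} (h : ∀ a b, ¬ H.Adj a b) (n : ℕ) :
    HasStrongEdgeColoring H n := by
  have hfalse : ∀ e : H.edgeSet, False := by
    rintro ⟨e, he⟩
    induction e with
    | _ a b => exact h a b ((H.mem_edgeSet).mp he)
  exact ⟨fun e => (hfalse e).elim, fun e f _ _ => (hfalse e).elim⟩

lemma hasMinor_mono {W : Type} {G G' : SimpleGraph V} {K : SimpleGraph W}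
    (hle : G ≤ G') (h : HasMinor G K) : HasMinor G' K := by
  obtain ⟨b, hne, hconn, hdisj, hadj⟩ := h
  refine ⟨b, hne, fun w => (hconn w).mono (fun a b' hab => hle hab), hdisj,
    fun w₁ w₂ hw => ?_⟩
  obtain ⟨a, ha, a', ha', haa⟩ := hadj hw
  exact ⟨a, ha, a', ha', hle haa⟩

lemma isPlanar_mono {G G' : SimpleGraph V} (hle : G ≤ G') (h : IsPlanar G') : IsPlanar G :=
  ⟨fun hm => h.1 (hasMinor_mono hle hm), fun hm => h.2 (hasMinor_mono hle hm)⟩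

end AuxLemmas

lemma ext_two [Fintype V] [DecidableEq V] (G : SimpleGraph V) (n : ℕ) (v u w : V)
    (hvu : G.Adj v u) (hvw : G.Adj v w)
    (hNv : ∀ x, G.Adj v x → x = u ∨ x = w)
    (ku kw : ℕ) (hku : ku + 1 < n) (hkw : kw + 1 < n)
    (hcu : ∀ s : Finset (Sym2 V),
      (∀ f ∈ s, f ∈ (G.deleteEdges {s(v,u), s(v,w)}).edgeSet ∧ edgesConflict G s(v,u) f) →
      s.card ≤ ku)
    (hcw : ∀ s : Finset (Sym2 V),
      (∀ f ∈ s, f ∈ (G.deleteEdges {s(v,u), s(v,w)}).edgeSet ∧ edgesConflict G s(v,w) f) →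
      s.card ≤ kw)
    (hH : HasStrongEdgeColoring (G.deleteEdges {s(v,u), s(v,w)}) n) :
    HasStrongEdgeColoring G n := by
  classical
  set H := G.deleteEdges {s(v,u), s(v,w)} with hHdef
  obtain ⟨c, hc⟩ := hH
  have hiso : ∀ z, ¬ H.Adj v z := by
    intro z hz
    rw [hHdef, SimpleGraph.deleteEdges_adj] at hz
    rcases hNv z hz.1 with rfl | rfl
    · exact hz.2 (Or.inl rfl)
    · exact hz.2 (Or.inr rfl)
  have hvf : ∀ f : Sym2 V, f ∈ H.edgeSet → v ∉ f := fun f hf =>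
    not_mem_edge_of_isolated hiso hf
  have htrans : ∀ e f : Sym2 V, e ∈ H.edgeSet → f ∈ H.edgeSet →
      edgesConflict G e f → edgesConflict H e f := by
    rintro e f he hf ⟨a, b, ha, hb, hab | hab⟩
    · exact ⟨a, b, ha, hb, Or.inl hab⟩
    · refine ⟨a, b, ha, hb, Or.inr ?_⟩
      rw [hHdef, SimpleGraph.deleteEdges_adj]
      refine ⟨hab, ?_⟩
      intro hmem
      have hva : v ∈ s(a, b) := by
        rcases hmem with h | h
        · rw [h]; exact Sym2.mem_mk_left v u
        · rw [Set.mem_singleton_iff] at h; rw [h]; exact Sym2.mem_mk_left v w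
      rcases Sym2.mem_iff.mp hva with rfl | rfl
      · exact hvf e he ha
      · exact hvf f hf hb
  -- forbidden colors for the edge s(v,u)
  set Fu : Finset (Fin n) :=
    ((univ : Finset H.edgeSet).filter (fun f => edgesConflict G s(v,u) f.1)).image c with hFudef
  have hFu : Fu.card ≤ ku := by
    refine le_trans Finset.card_image_le ?_
    rw [← Finset.card_image_of_injective _ (Subtype.val_injective
      (p := fun e => e ∈ H.edgeSet))]
    apply hcu
    intro f hf
    simp only [Finset.mem_image, Finset.mem_filter, Finset.mem_univ, true_and] at hf
    obtain ⟨g, hg, rfl⟩ := hf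
    exact ⟨g.2, hg⟩
  set Fw : Finset (Fin n) :=
    ((univ : Finset H.edgeSet).filter (fun f => edgesConflict G s(v,w) f.1)).image c with hFwdef
  have hFw : Fw.card ≤ kw := by
    refine le_trans Finset.card_image_le ?_
    rw [← Finset.card_image_of_injective _ (Subtype.val_injective
      (p := fun e => e ∈ H.edgeSet))]
    apply hcw
    intro f hf
    simp only [Finset.mem_image, Finset.mem_filter, Finset.mem_univ, true_and] at hf
    obtain ⟨g, hg, rfl⟩ := hf
    exact ⟨g.2, hg⟩
  obtain ⟨c1, hc1⟩ : ∃ c1, c1 ∉ Fu := by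
    by_contra h
    push_neg at h
    have : Fu = Finset.univ := Finset.eq_univ_iff_forall.mpr h
    have hn : Fu.card = n := by rw [this, Finset.card_univ, Fintype.card_fin]
    omega
  obtain ⟨c2, hc2⟩ : ∃ c2, c2 ∉ insert c1 Fw := by
    by_contra h
    push_neg at h
    have : insert c1 Fw = Finset.univ := Finset.eq_univ_iff_forall.mpr h
    have hn : (insert c1 Fw).card = n := by rw [this, Finset.card_univ, Fintype.card_fin]
    have := Finset.card_insert_le c1 Fw
    omega
  have hc12 : c1 ≠ c2 := fun h => hc2 (h ▸ Finset.mem_insert_self c1 Fw)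
  have hmem' : ∀ e : G.edgeSet, e.1 ≠ s(v,u) → e.1 ≠ s(v,w) → e.1 ∈ H.edgeSet := by
    intro e h1 h2
    rw [hHdef, SimpleGraph.edgeSet_deleteEdges]
    refine ⟨e.2, ?_⟩
    intro hmem
    rcases hmem with h | h
    · exact h1 h
    · exact h2 (Set.mem_singleton_iff.mp h)
  have key_u : ∀ (f : G.edgeSet) (hmf : f.1 ∈ H.edgeSet),
      edgesConflict G s(v,u) f.1 → c ⟨f.1, hmf⟩ ≠ c1 := by
    intro f hmf hcf hce
    apply hc1
    rw [← hce, hFudef]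
    exact Finset.mem_image_of_mem c (Finset.mem_filter.mpr ⟨Finset.mem_univ _, hcf⟩)
  have key_w : ∀ (f : G.edgeSet) (hmf : f.1 ∈ H.edgeSet),
      edgesConflict G s(v,w) f.1 → c ⟨f.1, hmf⟩ ≠ c2 := by
    intro f hmf hcf hce
    apply hc2
    rw [← hce, hFwdef]
    exact Finset.mem_insert_of_mem
      (Finset.mem_image_of_mem c (Finset.mem_filter.mpr ⟨Finset.mem_univ _, hcf⟩))
  refine ⟨fun e => if h1 : e.1 = s(v,u) then c1 else if h2 : e.1 = s(v,w) then c2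
    else c ⟨e.1, hmem' e h1 h2⟩, ?_⟩
  intro e f hef hconf
  have hvals : e.1 ≠ f.1 := fun h => hef (Subtype.ext h)
  beta_reduce
  by_cases he1 : e.1 = s(v,u)
  · rw [dif_pos he1]
    by_cases hf1 : f.1 = s(v,u)
    · exact absurd (he1.trans hf1.symm) hvals
    · rw [dif_neg hf1]
      by_cases hf2 : f.1 = s(v,w)
      · rw [dif_pos hf2]; exact hc12
      · rw [dif_neg hf2]
        exact (key_u f (hmem' f hf1 hf2) (he1 ▸ hconf)).symm
  · rw [dif_neg he1]
    by_cases he2 : e.1 = s(v,w)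
    · rw [dif_pos he2]
      by_cases hf1 : f.1 = s(v,u)
      · rw [dif_pos hf1]
        exact fun h => hc2 (h ▸ Finset.mem_insert_self c1 Fw)
      · rw [dif_neg hf1]
        by_cases hf2 : f.1 = s(v,w)
        · exact absurd (he2.trans hf2.symm) hvals
        · rw [dif_neg hf2]
          exact (key_w f (hmem' f hf1 hf2) (he2 ▸ hconf)).symm
    · rw [dif_neg he2]
      by_cases hf1 : f.1 = s(v,u)
      · rw [dif_pos hf1]
        exact key_u e (hmem' e he1 he2) (hf1 ▸ edgesConflict_comm hconf)
      · rw [dif_neg hf1]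
        by_cases hf2 : f.1 = s(v,w)
        · rw [dif_pos hf2]
          exact key_w e (hmem' e he1 he2) (hf2 ▸ edgesConflict_comm hconf)
        · rw [dif_neg hf2]
          exact hc ⟨e.1, hmem' e he1 he2⟩ ⟨f.1, hmem' f hf1 hf2⟩
            (fun h => hvals (congrArg Subtype.val h : (⟨e.1, hmem' e he1 he2⟩ : {x // x ∈ H.edgeSet}).1 = _))
            (htrans e.1 f.1 (hmem' e he1 he2) (hmem' f hf1 hf2) hconf)

section Count
variable [Fintype V] [DecidableEq V]

lemma degree_deleteEdges_le (G : SimpleGraph V) [DecidableRel G.Adj] (D : Set (Sym2 V))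
    [DecidableRel (G.deleteEdges D).Adj] (x : V) :
    (G.deleteEdges D).degree x ≤ G.degree x := by
  apply Finset.card_le_card
  intro z hz
  rw [SimpleGraph.mem_neighborFinset] at hz ⊢
  exact (SimpleGraph.deleteEdges_le D) hz

lemma isolated_deleteEdges {G : SimpleGraph V} {D : Set (Sym2 V)} {v u w : V}
    (hNv : ∀ x, G.Adj v x → x = u ∨ x = w)
    (hD1 : s(v,u) ∈ D) (hD2 : s(v,w) ∈ D) :
    ∀ z, ¬ (G.deleteEdges D).Adj v z := by
  intro z hz
  rw [SimpleGraph.deleteEdges_adj] at hz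
  rcases hNv z hz.1 with rfl | rfl
  · exact hz.2 hD1
  · exact hz.2 hD2

lemma conflict_count (G : SimpleGraph V) [DecidableRel G.Adj] (D : Set (Sym2 V))
    [DecidableRel (G.deleteEdges D).Adj] (Δ : ℕ)
    (hdeg : ∀ x, G.degree x ≤ Δ) (v u w : V)
    (hvu : G.Adj v u) (hvw : G.Adj v w) (hNv : ∀ x, G.Adj v x → x = u ∨ x = w)
    (hdu : G.degree u ≤ 4) (hdw : G.degree w ≤ 4)
    (hD1 : s(v,u) ∈ D) (hD2 : s(v,w) ∈ D)
    (s : Finset (Sym2 V))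
    (hs : ∀ f ∈ s, f ∈ (G.deleteEdges D).edgeSet ∧ edgesConflict G s(v,u) f) :
    s.card ≤ 3 * Δ + 3 := by
  set F := G.deleteEdges D with hFdef
  have hFle : F ≤ G := SimpleGraph.deleteEdges_le D
  have hiso : ∀ z, ¬ F.Adj v z := isolated_deleteEdges hNv hD1 hD2
  set S : Finset V := (G.neighborFinset u).erase v with hSdef
  set T : Finset V := insert w S with hTdef
  have hsub : s ⊆ T.biUnion (fun y => F.incidenceFinset y) := by
    intro f hf
    obtain ⟨hfE, a, b, ha, hb, hab⟩ := hs f hf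
    rw [Finset.mem_biUnion]
    have hbf : v ∉ f := not_mem_edge_of_isolated hiso hfE
    have hufin : u ∈ f → ∃ y ∈ T, f ∈ F.incidenceFinset y := by
      intro hu
      obtain ⟨y, hy, hfy⟩ := exists_other hfE hu
      have hyv : y ≠ v := by
        rintro rfl
        exact hbf (by rw [hfy]; exact Sym2.mem_mk_right u y)
      refine ⟨y, Finset.mem_insert.mpr (Or.inr (Finset.mem_erase.mpr
        ⟨hyv, (G.mem_neighborFinset u y).mpr (hFle hy)⟩)), ?_⟩
      rw [SimpleGraph.mem_incidenceFinset]
      exact ⟨hfE, by rw [hfy]; exact Sym2.mem_mk_right u y⟩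
    rcases Sym2.mem_iff.mp ha with rfl | hau
    · rcases hab with rfl | hadj
      · exact absurd hb hbf
      · rcases hNv b hadj with hbu | hbw
        · exact hufin (hbu ▸ hb)
        · refine ⟨b, ?_, ?_⟩
          · rw [hbw]; exact Finset.mem_insert_self _ _
          · rw [SimpleGraph.mem_incidenceFinset]
            exact ⟨hfE, hb⟩
    · rcases hab with heq | hadj
      · exact hufin (by rw [← hau, heq]; exact hb)
      · have hbv : b ≠ v := fun h => hbf (h ▸ hb)
        have hadj' : G.Adj u b := by rwa [hau] at hadj
        refine ⟨b, Finset.mem_insert.mpr (Or.inr (Finset.mem_erase.mpr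
          ⟨hbv, (G.mem_neighborFinset u b).mpr hadj'⟩)), ?_⟩
        rw [SimpleGraph.mem_incidenceFinset]
        exact ⟨hfE, hb⟩
  have hScard : S.card ≤ 3 := by
    have hvS : v ∈ G.neighborFinset u := (G.mem_neighborFinset u v).mpr hvu.symm
    have hce := Finset.card_erase_of_mem hvS
    rw [← hSdef] at hce
    have hd : (G.neighborFinset u).card = G.degree u := rfl
    omega
  have hFw : F.degree w ≤ 3 := by
    have hsub2 : F.neighborFinset w ⊆ (G.neighborFinset w).erase v := by
      intro z hz
      rw [SimpleGraph.mem_neighborFinset] at hz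
      refine Finset.mem_erase.mpr ⟨?_, (G.mem_neighborFinset w z).mpr (hFle hz)⟩
      rintro rfl
      exact hiso w hz.symm
    have hvw' : v ∈ G.neighborFinset w := (G.mem_neighborFinset w v).mpr hvw.symm
    have h1 := Finset.card_le_card hsub2
    have h2 := Finset.card_erase_of_mem hvw'
    have hd : (G.neighborFinset w).card = G.degree w := rfl
    have hd2 : (F.neighborFinset w).card = F.degree w := rfl
    omega
  have hsum : ∀ s' : Finset V, (∑ y ∈ s', F.degree y) ≤ s'.card * Δ := by
    intro s'
    calc (∑ y ∈ s', F.degree y) ≤ ∑ _y ∈ s', Δ :=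
          Finset.sum_le_sum (fun y _ => (degree_deleteEdges_le G D y).trans (hdeg y))
      _ = s'.card * Δ := by rw [Finset.sum_const, smul_eq_mul]
  calc s.card ≤ (T.biUnion (fun y => F.incidenceFinset y)).card := Finset.card_le_card hsub
    _ ≤ ∑ y ∈ T, (F.incidenceFinset y).card := Finset.card_biUnion_le
    _ = ∑ y ∈ T, F.degree y := by
        refine Finset.sum_congr rfl (fun y _ => ?_)
        exact F.card_incidenceFinset_eq_degree y
    _ ≤ 3 * Δ + 3 := by
        by_cases hw : w ∈ S
        · rw [hTdef, Finset.insert_eq_self.mpr hw]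
          have := hsum S
          have : S.card * Δ ≤ 3 * Δ := Nat.mul_le_mul_right Δ hScard
          omega
        · rw [hTdef, Finset.sum_insert hw]
          have h1 := hsum S
          have h2 : S.card * Δ ≤ 3 * Δ := Nat.mul_le_mul_right Δ hScard
          omega
end Count

lemma conflict_count_leaf [Fintype V] [DecidableEq V] (H : SimpleGraph V)
    [DecidableRel H.Adj] (D : Set (Sym2 V)) [DecidableRel (H.deleteEdges D).Adj] (Δ : ℕ)
    (hdeg : ∀ y, H.degree y ≤ Δ) (x p : V)
    (hxp : H.Adj x p) (hNx : ∀ y, H.Adj x y → y = p)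
    (huniq : ∀ y z, H.Adj p y → H.Adj p z → 2 ≤ H.degree y → 2 ≤ H.degree z → y = z)
    (hD : s(x,p) ∈ D) (s : Finset (Sym2 V))
    (hs : ∀ f ∈ s, f ∈ (H.deleteEdges D).edgeSet ∧ edgesConflict H s(x,p) f) :
    s.card ≤ 2 * Δ := by
  set F := H.deleteEdges D with hFdef
  have hFle : F ≤ H := SimpleGraph.deleteEdges_le D
  have hiso : ∀ z, ¬ F.Adj x z :=
    isolated_deleteEdges (u := p) (w := p) (fun y hy => Or.inl (hNx y hy)) hD hD
  set S : Finset V := (H.neighborFinset p).erase x with hSdef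
  have hsub : s ⊆ S.biUnion (fun y => F.incidenceFinset y) := by
    intro f hf
    obtain ⟨hfE, a, b, ha, hb, hab⟩ := hs f hf
    rw [Finset.mem_biUnion]
    have hbf : x ∉ f := not_mem_edge_of_isolated hiso hfE
    have hpfin : p ∈ f → ∃ y ∈ S, f ∈ F.incidenceFinset y := by
      intro hp
      obtain ⟨y, hy, hfy⟩ := exists_other hfE hp
      have hyx : y ≠ x := by
        rintro rfl
        exact hbf (by rw [hfy]; exact Sym2.mem_mk_right p y)
      refine ⟨y, Finset.mem_erase.mpr ⟨hyx, (H.mem_neighborFinset p y).mpr (hFle hy)⟩, ?_⟩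
      rw [SimpleGraph.mem_incidenceFinset]
      exact ⟨hfE, by rw [hfy]; exact Sym2.mem_mk_right p y⟩
    rcases Sym2.mem_iff.mp ha with rfl | hap
    · rcases hab with rfl | hadj
      · exact absurd hb hbf
      · have := hNx b hadj
        subst this
        exact hpfin hb
    · rcases hab with heq | hadj
      · exact hpfin (by rw [← hap, heq]; exact hb)
      · have hadj' : H.Adj p b := by rwa [hap] at hadj
        have hbx : b ≠ x := fun h => hbf (h ▸ hb)
        refine ⟨b, Finset.mem_erase.mpr ⟨hbx, (H.mem_neighborFinset p b).mpr hadj'⟩, ?_⟩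
        rw [SimpleGraph.mem_incidenceFinset]
        exact ⟨hfE, hb⟩
  have hScard : S.card ≤ Δ := by
    have h1 : S.card ≤ (H.neighborFinset p).card := Finset.card_le_card (Finset.erase_subset _ _)
    have hd : (H.neighborFinset p).card = H.degree p := rfl
    have := hdeg p
    omega
  have hcards : s.card ≤ ∑ y ∈ S, F.degree y := by
    calc s.card ≤ (S.biUnion (fun y => F.incidenceFinset y)).card := Finset.card_le_card hsub
      _ ≤ ∑ y ∈ S, (F.incidenceFinset y).card := Finset.card_biUnion_le
      _ = ∑ y ∈ S, F.degree y :=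
          Finset.sum_congr rfl (fun y _ => F.card_incidenceFinset_eq_degree y)
  by_cases hq : ∃ q, H.Adj p q ∧ 2 ≤ H.degree q
  · obtain ⟨q, hq1, hq2⟩ := hq
    have hpt : ∀ y ∈ S, F.degree y ≤ if y = q then Δ else 1 := by
      intro y hy
      by_cases hyq : y = q
      · rw [if_pos hyq]
        exact (degree_deleteEdges_le H D y).trans (hdeg y)
      · rw [if_neg hyq]
        have hpy : H.Adj p y := (H.mem_neighborFinset p y).mp (Finset.mem_of_mem_erase hy)
        have hdy : H.degree y ≤ 1 := by
          by_contra hh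
          exact hyq (huniq y q hpy hq1 (by omega) hq2)
        exact (degree_deleteEdges_le H D y).trans hdy
    have h2 : (∑ y ∈ S, F.degree y) ≤ ∑ y ∈ S, (if y = q then Δ else 1) :=
      Finset.sum_le_sum hpt
    have h3 : (∑ y ∈ S, (if y = q then Δ else 1)) ≤
        (∑ y ∈ S, (if y = q then Δ else 0)) + ∑ _y ∈ S, 1 := by
      rw [← Finset.sum_add_distrib]
      refine Finset.sum_le_sum (fun y _ => ?_)
      by_cases hyq : y = q <;> simp [hyq]
    have h4 : (∑ y ∈ S, (if y = q then Δ else 0)) ≤ Δ := by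
      rw [Finset.sum_ite_eq' S q (fun _ => Δ)]
      split <;> omega
    have h5 : (∑ _y ∈ S, 1) = S.card := by simp
    omega
  · push_neg at hq
    have hpt : ∀ y ∈ S, F.degree y ≤ 1 := by
      intro y hy
      have hpy : H.Adj p y := (H.mem_neighborFinset p y).mp (Finset.mem_of_mem_erase hy)
      exact (degree_deleteEdges_le H D y).trans (by have := hq y hpy; omega)
    have h2 : (∑ y ∈ S, F.degree y) ≤ ∑ _y ∈ S, 1 := Finset.sum_le_sum hpt
    have h5 : (∑ _y ∈ S, 1) = S.card := by simp
    omega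

lemma exists_leaf [Fintype V] [DecidableEq V] {K : SimpleGraph V} [DecidableRel K.Adj]
    (hac : K.IsAcyclic) {a b : V} (hab : K.Adj a b) :
    ∃ x x', K.neighborFinset x = {x'} := by
  set P : Set ℕ := {n | ∃ (x y : V) (p : K.Walk x y), p.IsPath ∧ p.length = n} with hP
  have h1P : (1 : ℕ) ∈ P := by
    refine ⟨a, b, Walk.cons hab Walk.nil, ?_, by simp⟩
    rw [Walk.cons_isPath_iff]
    simp [hab.ne]
  have hbdd : BddAbove P := by
    refine ⟨Fintype.card V, ?_⟩
    rintro n ⟨x, y, p, hp, rfl⟩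
    exact hp.length_lt.le
  obtain ⟨x, y, p, hp, hlen⟩ := Nat.sSup_mem ⟨1, h1P⟩ hbdd
  have h1le : 1 ≤ sSup P := le_csSup hbdd h1P
  cases p with
  | nil => simp at hlen; omega
  | cons h p' =>
    rename_i x'
    -- h : K.Adj x x', p' : K.Walk x' y
    rw [Walk.cons_isPath_iff] at hp
    obtain ⟨hp', hxp'⟩ := hp
    refine ⟨x, x', ?_⟩
    ext y'
    rw [SimpleGraph.mem_neighborFinset, Finset.mem_singleton]
    constructor
    · intro hy'
      by_contra hne'
      by_cases hmem : y' ∈ p'.support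
      · -- build a cycle
        set q := p'.takeUntil y' hmem with hq
        have hqpath : q.IsPath := hp'.takeUntil hmem
        have hcyc : (Walk.cons hy'.symm (Walk.cons h q)).IsCycle := by
          rw [Walk.cons_isCycle_iff]
          constructor
          · rw [Walk.cons_isPath_iff]
            exact ⟨hqpath, fun hx => hxp' (Walk.support_takeUntil_subset _ hmem hx)⟩
          · rw [Walk.edges_cons]
            intro hmem2
            rcases List.mem_cons.mp hmem2 with h1 | h2
            · rw [Sym2.eq_iff] at h1
              rcases h1 with ⟨ha1, hb1⟩ | ⟨ha1, hb1⟩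
              · exact hy'.ne' ha1
              · exact hne' ha1
            · exact hxp' (Walk.support_takeUntil_subset _ hmem
                (Walk.snd_mem_support_of_mem_edges q h2))
        exact hac _ hcyc
      · -- extend the path
        have hpath2 : (Walk.cons hy'.symm (Walk.cons h p')).IsPath := by
          rw [Walk.cons_isPath_iff, Walk.cons_isPath_iff]
          refine ⟨⟨hp', hxp'⟩, ?_⟩
          rw [Walk.support_cons]
          intro hmem2
          rcases List.mem_cons.mp hmem2 with h1 | h2
          · exact hy'.ne' h1
          · exact hmem h2
        have hmemP : (Walk.cons h p').length + 1 ∈ P :=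
          ⟨_, _, _, hpath2, by simp [Walk.length_cons]⟩
        have := le_csSup hbdd hmemP
        omega
    · rintro rfl
      exact h

lemma degree_eq_one_of_nbr {H : SimpleGraph V} [Fintype V] [DecidableEq V]
    [DecidableRel H.Adj] {x p : V} (hxp : H.Adj x p) (hle : H.degree x ≤ 1) :
    H.degree x = 1 := by
  have h1 : 1 ≤ H.degree x := by
    rw [← SimpleGraph.card_neighborFinset_eq_degree]
    exact Finset.card_pos.mpr ⟨p, (H.mem_neighborFinset x p).mpr hxp⟩
  omega

lemma exists_pendant [Fintype V] [DecidableEq V] {H : SimpleGraph V} [DecidableRel H.Adj]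
    (hac : H.IsAcyclic) {a b : V} (hab : H.Adj a b) :
    ∃ x p, H.Adj x p ∧ H.degree x = 1 ∧
      ∀ y z, H.Adj p y → H.Adj p z → 2 ≤ H.degree y → 2 ≤ H.degree z → y = z := by
  classical
  set F : SimpleGraph V :=
    { Adj := fun c d => H.Adj c d ∧ 2 ≤ H.degree c ∧ 2 ≤ H.degree d,
      symm := ⟨fun c d ⟨h1, h2, h3⟩ => ⟨h1.symm, h3, h2⟩⟩,
      loopless := ⟨fun c ⟨h1, _⟩ => h1.ne rfl⟩ } with hFdef
  haveI : DecidableRel F.Adj := fun c d => instDecidableAnd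
  have hFle : F ≤ H := fun c d hcd => hcd.1
  have hFac : F.IsAcyclic := fun v c hc => hac (c.mapLe hFle) (hc.mapLe hFle)
  by_cases hF : ∃ c d, F.Adj c d
  · obtain ⟨c', d', hcd'⟩ := hF
    obtain ⟨p, q, hnb⟩ := exists_leaf hFac hcd'
    have hpq : F.Adj p q := by
      rw [← SimpleGraph.mem_neighborFinset, hnb]
      exact Finset.mem_singleton_self q
    have hdp : 2 ≤ H.degree p := hpq.2.1
    have hsub : (H.neighborFinset p).filter (fun y => 2 ≤ H.degree y) ⊆ {q} := by
      intro y hy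
      rw [Finset.mem_filter, SimpleGraph.mem_neighborFinset] at hy
      rw [← hnb, SimpleGraph.mem_neighborFinset]
      exact ⟨hy.1, hdp, hy.2⟩
    have hex : ((H.neighborFinset p).filter (fun y => ¬ 2 ≤ H.degree y)).Nonempty := by
      rw [← Finset.card_pos]
      have hcf := Finset.card_le_card hsub
      rw [Finset.card_singleton] at hcf
      have hsplit := Finset.card_filter_add_card_filter_not
        (s := H.neighborFinset p) (p := fun y => 2 ≤ H.degree y)
      have hd : (H.neighborFinset p).card = H.degree p := rfl
      omega
    obtain ⟨x, hx⟩ := hex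
    rw [Finset.mem_filter, SimpleGraph.mem_neighborFinset] at hx
    refine ⟨x, p, hx.1.symm, degree_eq_one_of_nbr hx.1.symm (by omega), ?_⟩
    intro y z hy hz h2y h2z
    have hy' : y ∈ ({q} : Finset V) := hsub (by
      rw [Finset.mem_filter, SimpleGraph.mem_neighborFinset]; exact ⟨hy, h2y⟩)
    have hz' : z ∈ ({q} : Finset V) := hsub (by
      rw [Finset.mem_filter, SimpleGraph.mem_neighborFinset]; exact ⟨hz, h2z⟩)
    rw [Finset.mem_singleton] at hy' hz'
    rw [hy', hz']
  · push_neg at hF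
    -- every edge has an endpoint of degree ≤ 1
    have hkey : ∀ c d, H.Adj c d → ¬ 2 ≤ H.degree c ∨ ¬ 2 ≤ H.degree d := by
      intro c d hcd
      by_contra hcon
      push_neg at hcon
      exact hF c d ⟨hcd, hcon.1, hcon.2⟩
    have huniq : ∀ p : V, ∀ y z, H.Adj p y → H.Adj p z →
        2 ≤ H.degree y → 2 ≤ H.degree z → y = z := by
      intro p y z hy hz h2y h2z
      rcases hkey p y hy with hc | hd
      · -- degree p ≤ 1 : neighbors are unique
        have hple : H.degree p ≤ 1 := by omega
        have : (H.neighborFinset p).card ≤ 1 := hple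
        exact Finset.card_le_one.mp this y ((H.mem_neighborFinset p y).mpr hy)
          z ((H.mem_neighborFinset p z).mpr hz)
      · exact absurd h2y hd
    rcases hkey a b hab with hc | hd
    · exact ⟨a, b, hab, degree_eq_one_of_nbr hab (by omega), huniq b⟩
    · exact ⟨b, a, hab.symm, degree_eq_one_of_nbr hab.symm (by omega), huniq a⟩

lemma forest_coloring [Fintype V] [DecidableEq V] (Δ : ℕ) (m : ℕ) :
    ∀ (H : SimpleGraph V) [DecidableRel H.Adj], H.edgeFinset.card ≤ m →
      H.IsAcyclic → (∀ x, H.degree x ≤ Δ) → HasStrongEdgeColoring H (3 * Δ + 6) := by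
  induction m with
  | zero =>
    intro H _ hcard hac hdeg
    refine hasColoring_of_no_edges (fun a b hab => ?_) _
    have : s(a, b) ∈ H.edgeFinset := (SimpleGraph.mem_edgeFinset).mpr hab
    have hcc : H.edgeFinset = ∅ := Finset.card_eq_zero.mp (by omega)
    rw [hcc] at this
    exact absurd this (Finset.notMem_empty _)
  | succ m ih =>
    intro H instH hcard hac hdeg
    by_cases hE : ∃ a b, H.Adj a b
    · obtain ⟨a, b, hab⟩ := hE
      obtain ⟨x, p, hxp, hdx, huniq⟩ := exists_pendant hac hab
      have hNx : ∀ y, H.Adj x y → y = p := by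
        intro y hy
        have hc1 : (H.neighborFinset x).card ≤ 1 := by
          rw [SimpleGraph.card_neighborFinset_eq_degree, hdx]
        exact Finset.card_le_one.mp hc1 y ((H.mem_neighborFinset x y).mpr hy)
          p ((H.mem_neighborFinset x p).mpr hxp)
      haveI hFinst : DecidableRel (H.deleteEdges {s(x,p), s(x,p)}).Adj := fun c d =>
        decidable_of_iff (H.Adj c d ∧ ¬(s(c,d) = s(x,p) ∨ s(c,d) = s(x,p)))
          (by rw [SimpleGraph.deleteEdges_adj]
              simp only [Set.mem_insert_iff, Set.mem_singleton_iff])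
      apply ext_two H (3*Δ+6) x p p hxp hxp (fun y hy => Or.inl (hNx y hy))
        (2*Δ) (2*Δ) (by omega) (by omega)
      · intro s hs
        have := conflict_count_leaf H {s(x,p), s(x,p)} Δ hdeg x p hxp hNx huniq
          (Set.mem_insert _ _) s hs
        omega
      · intro s hs
        have := conflict_count_leaf H {s(x,p), s(x,p)} Δ hdeg x p hxp hNx huniq
          (Set.mem_insert _ _) s hs
        omega
      · -- color the smaller forest
        have hsubF : (H.deleteEdges {s(x,p), s(x,p)}).edgeFinset ⊆ H.edgeFinset := by
          intro e he
          rw [SimpleGraph.mem_edgeFinset] at he ⊢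
          exact SimpleGraph.edgeSet_mono (SimpleGraph.deleteEdges_le _) he
        have hmemH : s(x,p) ∈ H.edgeFinset := (SimpleGraph.mem_edgeFinset).mpr hxp
        have hnotF : s(x,p) ∉ (H.deleteEdges {s(x,p), s(x,p)}).edgeFinset := by
          rw [SimpleGraph.mem_edgeFinset, SimpleGraph.edgeSet_deleteEdges]
          exact fun h => h.2 (Set.mem_insert _ _)
        have hlt : (H.deleteEdges {s(x,p), s(x,p)}).edgeFinset.card < H.edgeFinset.card :=
          Finset.card_lt_card ((Finset.ssubset_iff_of_subset hsubF).mpr ⟨_, hmemH, hnotF⟩)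
        have hacF : (H.deleteEdges {s(x,p), s(x,p)}).IsAcyclic := fun v c hc =>
          hac (c.mapLe (SimpleGraph.deleteEdges_le _)) (hc.mapLe (SimpleGraph.deleteEdges_le _))
        exact ih (H.deleteEdges {s(x,p), s(x,p)}) (by omega) hacF
          (fun y => (degree_deleteEdges_le H _ y).trans (hdeg y))
    · push_neg at hE
      exact hasColoring_of_no_edges (fun a b => hE a b) _
/-- In a minimal counterexample to "planar, girth ≥ 6, max degree Δ ≥ 4 ⟹ χ'ₛ ≤ 3Δ+6",
every vertex of degree 2 has a neighbor of degree at least 5. -/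
theorem min_cex_two_vertex (V : Type) [Fintype V] [DecidableEq V] (G : SimpleGraph V)
    [DecidableRel G.Adj] (Δ : ℕ)
    (hplanar : IsPlanar G) (hgirth : 6 ≤ G.girth) (hmax : G.maxDegree = Δ) (hΔ : 4 ≤ Δ)
    (hcex : ¬ HasStrongEdgeColoring G (3 * Δ + 6))
    (hmin : ∀ (W : Type) [Fintype W] [DecidableEq W] (H : SimpleGraph W)
      [DecidableRel H.Adj], IsPlanar H → 6 ≤ H.girth → H.maxDegree ≤ Δ →
      H.edgeFinset.card < G.edgeFinset.card → HasStrongEdgeColoring H (3 * Δ + 6)) :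
    ∀ v, G.degree v = 2 → ∃ u, G.Adj v u ∧ 5 ≤ G.degree u := by
  intro v hdeg2
  by_contra hno
  push_neg at hno
  have hdeg : ∀ x, G.degree x ≤ Δ := fun x => hmax ▸ G.degree_le_maxDegree x
  rw [← SimpleGraph.card_neighborFinset_eq_degree] at hdeg2
  obtain ⟨u, w, huw, hnb⟩ := Finset.card_eq_two.mp hdeg2
  have hvu : G.Adj v u := by
    rw [← SimpleGraph.mem_neighborFinset, hnb]; simp
  have hvw : G.Adj v w := by
    rw [← SimpleGraph.mem_neighborFinset, hnb]; simp
  have hNv : ∀ x, G.Adj v x → x = u ∨ x = w := by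
    intro x hx
    have hx' : x ∈ G.neighborFinset v := (G.mem_neighborFinset v x).mpr hx
    rw [hnb] at hx'
    simpa using hx'
  have hdu : G.degree u ≤ 4 := by have := hno u hvu; omega
  have hdw : G.degree w ≤ 4 := by have := hno w hvw; omega
  haveI instH : DecidableRel (G.deleteEdges {s(v,u), s(v,w)}).Adj := fun c d =>
    decidable_of_iff (G.Adj c d ∧ ¬(s(c,d) = s(v,u) ∨ s(c,d) = s(v,w)))
      (by rw [SimpleGraph.deleteEdges_adj]
          simp only [Set.mem_insert_iff, Set.mem_singleton_iff])
  have hle : G.deleteEdges {s(v,u), s(v,w)} ≤ G := SimpleGraph.deleteEdges_le _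
  have hdegH : ∀ x, (G.deleteEdges {s(v,u), s(v,w)}).degree x ≤ Δ :=
    fun x => (degree_deleteEdges_le G _ x).trans (hdeg x)
  have hcolH : HasStrongEdgeColoring (G.deleteEdges {s(v,u), s(v,w)}) (3*Δ+6) := by
    by_cases hacH : (G.deleteEdges {s(v,u), s(v,w)}).IsAcyclic
    · exact forest_coloring Δ (G.deleteEdges {s(v,u), s(v,w)}).edgeFinset.card
        (G.deleteEdges {s(v,u), s(v,w)}) le_rfl hacH hdegH
    · have hg : 6 ≤ (G.deleteEdges {s(v,u), s(v,w)}).girth :=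
        le_trans hgirth (SimpleGraph.girth_anti hle hacH)
      have hplanarH : IsPlanar (G.deleteEdges {s(v,u), s(v,w)}) := isPlanar_mono hle hplanar
      have hmaxH : (G.deleteEdges {s(v,u), s(v,w)}).maxDegree ≤ Δ :=
        (G.deleteEdges {s(v,u), s(v,w)}).maxDegree_le_of_forall_degree_le Δ hdegH
      have hsubF : (G.deleteEdges {s(v,u), s(v,w)}).edgeFinset ⊆ G.edgeFinset := by
        intro e he
        rw [SimpleGraph.mem_edgeFinset] at he ⊢
        exact SimpleGraph.edgeSet_mono hle he
      have hmemG : s(v,u) ∈ G.edgeFinset := (SimpleGraph.mem_edgeFinset).mpr hvu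
      have hnotF : s(v,u) ∉ (G.deleteEdges {s(v,u), s(v,w)}).edgeFinset := by
        rw [SimpleGraph.mem_edgeFinset, SimpleGraph.edgeSet_deleteEdges]
        exact fun h => h.2 (Set.mem_insert _ _)
      have hlt : (G.deleteEdges {s(v,u), s(v,w)}).edgeFinset.card < G.edgeFinset.card :=
        Finset.card_lt_card ((Finset.ssubset_iff_of_subset hsubF).mpr ⟨_, hmemG, hnotF⟩)
      exact hmin V (G.deleteEdges {s(v,u), s(v,w)}) hplanarH hg hmaxH hlt
  apply hcex
  apply ext_two G (3*Δ+6) v u w hvu hvw hNv (3*Δ+3) (3*Δ+3) (by omega) (by omega)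
    ?_ ?_ hcolH
  · intro s hs
    exact conflict_count G {s(v,u), s(v,w)} Δ hdeg v u w hvu hvw hNv hdu hdw
      (Set.mem_insert _ _) (Set.mem_insert_of_mem _ rfl) s hs
  · intro s hs
    exact conflict_count G {s(v,u), s(v,w)} Δ hdeg v w u hvw hvu
      (fun x hx => (hNv x hx).symm) hdw hdu
      (Set.mem_insert_of_mem _ rfl) (Set.mem_insert _ _) s hs
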